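/- Let C be an open convex subset of ℝ^N and Φ : C → ℝ a continuous, twice Gâteaux differentiable convex function. Then the gradient map ∇Φ : C → ℝ^N is isotone with respect to the coordinatewise order if and only if all mixed second partial derivatives ∂²Φ/∂x_i∂x_j (i ≠ j) are nonnegative on C. -/

import Mathlib

open Set Filter Topology

/-- For a continuous, twice Gâteaux differentiable convex function `Φ` on an open convex
`C ⊆ ℝ^N`, the gradient map is isotone (for the componentwise order) iff all mixed
second partial derivatives `∂²Φ/∂x_i∂x_j` (i ≠ j) are nonnegative on `C`. -/
theorem stmt7 (N : ℕ) (C : Set (Fin N → ℝ)) (hCo : IsOpen C) (hCc : Convex ℝ C)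
    (Φ : (Fin N → ℝ) → ℝ) (hcont : ContinuousOn Φ C) (hconv : ConvexOn ℝ C Φ)
    (Φ' : (Fin N → ℝ) → ((Fin N → ℝ) →L[ℝ] ℝ))
    (Φ'' : (Fin N → ℝ) → ((Fin N → ℝ) →L[ℝ] (Fin N → ℝ) →L[ℝ] ℝ))
    (hd1 : ∀ x ∈ C, HasFDerivAt Φ (Φ' x) x)
    (hd2 : ∀ x ∈ C, HasFDerivAt Φ' (Φ'' x) x) :
    (∀ u ∈ C, ∀ v ∈ C, u ≤ v →
        ∀ i : Fin N, Φ' u (Pi.single i 1) ≤ Φ' v (Pi.single i 1)) ↔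
      (∀ x ∈ C, ∀ i j : Fin N, i ≠ j →
        0 ≤ Φ'' x (Pi.single i 1) (Pi.single j 1)) := by
  -- derivative of the line curve
  have hcurve : ∀ (x w : Fin N → ℝ) (t : ℝ),
      HasDerivAt (fun s : ℝ => x + s • w) w t := by
    intro x w t
    simpa using ((hasDerivAt_id t).smul_const w).const_add x
  -- derivative of t ↦ Φ (x + t w)
  have keyΦ : ∀ (x w : Fin N → ℝ) (t : ℝ), x + t • w ∈ C →
      HasDerivAt (fun s : ℝ => Φ (x + s • w)) (Φ' (x + t • w) w) t := by
    intro x w t ht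
    exact (hd1 _ ht).comp_hasDerivAt t (hcurve x w t)
  -- derivative of t ↦ Φ' (x + t w) v
  have key : ∀ (x w v : Fin N → ℝ) (t : ℝ), x + t • w ∈ C →
      HasDerivAt (fun s : ℝ => Φ' (x + s • w) v) (Φ'' (x + t • w) w v) t := by
    intro x w v t ht
    have h1 : HasDerivAt (fun s : ℝ => Φ' (x + s • w)) (Φ'' (x + t • w) w) t :=
      (hd2 _ ht).comp_hasDerivAt t (hcurve x w t)
    have := h1.clm_apply (hasDerivAt_const t v)
    simpa using this
  -- right-slope argument
  have slope_nonneg : ∀ (g : ℝ → ℝ) (d : ℝ), HasDerivAt g d 0 →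
      (∀ᶠ t in 𝓝[>] (0:ℝ), g 0 ≤ g t) → 0 ≤ d := by
    intro g d hg hle
    rw [hasDerivAt_iff_tendsto_slope] at hg
    have hg' := hg.mono_left (nhdsWithin_mono 0 (fun t (ht : t ∈ Set.Ioi 0) => ne_of_gt ht))
    refine ge_of_tendsto hg' ?_
    filter_upwards [hle, self_mem_nhdsWithin] with t h1 h2
    have h2' : (0:ℝ) < t := h2
    rw [slope_def_field]
    have : (0:ℝ) ≤ (g t - g 0) / (t - 0) := by
      apply div_nonneg (sub_nonneg.2 h1); simpa using h2'.le
    simpa [div_eq_inv_mul] using this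
  -- the line set
  have hline_open : ∀ (x w : Fin N → ℝ), IsOpen {t : ℝ | x + t • w ∈ C} := by
    intro x w
    have : {t : ℝ | x + t • w ∈ C} = (fun t : ℝ => x + t • w) ⁻¹' C := rfl
    rw [this]
    exact hCo.preimage (by continuity)
  have hline_conv : ∀ (x w : Fin N → ℝ), Convex ℝ {t : ℝ | x + t • w ∈ C} := by
    intro x w t1 ht1 t2 ht2 a b ha hb hab
    have h := hCc ht1 ht2 ha hb hab
    have heq : a • (x + t1 • w) + b • (x + t2 • w) = x + (a * t1 + b * t2) • w := by
      have : a • x + b • x = x := by rw [← add_smul, hab, one_smul]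
      rw [smul_add, smul_add, smul_smul, smul_smul, add_smul]
      rw [add_add_add_comm, this]
    rw [heq] at h
    simpa using h
  -- PSD of the Hessian on diagonal directions, from convexity
  have psd : ∀ x ∈ C, ∀ w : Fin N → ℝ, 0 ≤ Φ'' x w w := by
    intro x hx w
    set s : Set ℝ := {t : ℝ | x + t • w ∈ C} with hs
    have h0 : (0:ℝ) ∈ s := by simp [hs, hx]
    set φ : ℝ → ℝ := fun t => Φ (x + t • w) with hφ
    have hφconv : ConvexOn ℝ s φ := by
      have := hconv.comp_affineMap (AffineMap.lineMap x (x + w) : ℝ →ᵃ[ℝ] (Fin N → ℝ))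
      have e1 : s = ⇑(AffineMap.lineMap x (x + w) : ℝ →ᵃ[ℝ] (Fin N → ℝ)) ⁻¹' C := by
        ext t
        simp [hs, AffineMap.lineMap_apply, add_comm]
      have e2 : φ = Φ ∘ ⇑(AffineMap.lineMap x (x + w) : ℝ →ᵃ[ℝ] (Fin N → ℝ)) := by
        funext t
        simp [hφ, AffineMap.lineMap_apply, add_comm]
      rw [e1, e2]
      exact this
    have hφd : ∀ t ∈ s, HasDerivAt φ (Φ' (x + t • w) w) t := fun t ht => keyΦ x w t ht
    have hmono : MonotoneOn (deriv φ) s :=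
      hφconv.monotoneOn_deriv (fun t ht => (hφd t ht).differentiableAt)
    have hder : HasDerivAt (fun t : ℝ => Φ' (x + t • w) w) (Φ'' x w w) 0 := by
      simpa using key x w w 0 (by simpa using hx)
    apply slope_nonneg _ _ hder
    have hsnhds : s ∈ 𝓝 (0:ℝ) := (hline_open x w).mem_nhds h0
    filter_upwards [nhdsWithin_le_nhds hsnhds, self_mem_nhdsWithin] with t ht htpos
    have htpos' : (0:ℝ) < t := htpos
    have e0 : deriv φ 0 = Φ' (x + (0:ℝ) • w) w := (hφd 0 h0).deriv
    have et : deriv φ t = Φ' (x + t • w) w := (hφd t ht).deriv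
    have := hmono h0 ht htpos'.le
    rw [e0, et] at this
    simpa using this
  constructor
  · -- isotone ⇒ mixed partials nonneg
    intro hiso x hx i j hij
    set w : Fin N → ℝ := Pi.single i 1 with hwdef
    have hder : HasDerivAt (fun t : ℝ => Φ' (x + t • w) (Pi.single j 1))
        (Φ'' x w (Pi.single j 1)) 0 := by
      simpa using key x w (Pi.single j 1) 0 (by simpa using hx)
    apply slope_nonneg _ _ hder
    have hsnhds : {t : ℝ | x + t • w ∈ C} ∈ 𝓝 (0:ℝ) :=
      (hline_open x w).mem_nhds (by simp [hx])
    filter_upwards [nhdsWithin_le_nhds hsnhds, self_mem_nhdsWithin] with t ht htpos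
    have htpos' : (0:ℝ) < t := htpos
    have hle : x ≤ x + t • w := by
      intro k
      have hk : (0:ℝ) ≤ w k := by
        simp only [hwdef, Pi.single_apply]
        split <;> norm_num
      have : (0:ℝ) ≤ t * w k := mul_nonneg htpos'.le hk
      simp only [Pi.add_apply, Pi.smul_apply, smul_eq_mul]
      linarith
    have := hiso x hx _ ht hle j
    simpa using this
  · -- mixed partials nonneg ⇒ isotone
    intro hmix u hu v hv huv i
    set w : Fin N → ℝ := v - u with hwdef
    set s : Set ℝ := {t : ℝ | u + t • w ∈ C} with hs
    have h0 : (0:ℝ) ∈ s := by simp [hs, hu]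
    have h1 : (1:ℝ) ∈ s := by simp [hs, hwdef, hv]
    set g : ℝ → ℝ := fun t => Φ' (u + t • w) (Pi.single i 1) with hg
    have hgd : ∀ t ∈ s, HasDerivAt g (Φ'' (u + t • w) w (Pi.single i 1)) t :=
      fun t ht => key u w (Pi.single i 1) t ht
    have hnonneg : ∀ t ∈ s, 0 ≤ Φ'' (u + t • w) w (Pi.single i 1) := by
      intro t ht
      have hx' : u + t • w ∈ C := ht
      have hwrep : w = ∑ j : Fin N, w j • (Pi.single j 1 : Fin N → ℝ) := by
        funext k
        simp [Pi.single_apply]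
      have expand : Φ'' (u + t • w) w (Pi.single i 1)
          = ∑ j : Fin N, w j * Φ'' (u + t • w) (Pi.single j 1) (Pi.single i 1) := by
        conv_lhs => rw [hwrep]
        simp only [map_sum, map_smul, ContinuousLinearMap.coe_sum',
          Finset.sum_apply, ContinuousLinearMap.coe_smul', Pi.smul_apply, smul_eq_mul]
        rw [← hwrep]
      rw [expand]
      apply Finset.sum_nonneg
      intro j _
      have hwj : 0 ≤ w j := by
        have := huv j
        simp only [hwdef, Pi.sub_apply]
        linarith
      by_cases hji : j = i
      · subst hji
        exact mul_nonneg hwj (psd _ hx' _)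
      · exact mul_nonneg hwj (hmix _ hx' j i hji)
    have hsopen := hline_open u w
    have hsconv := hline_conv u w
    have hgc : ContinuousOn g s := fun t ht => ((hgd t ht).continuousAt).continuousWithinAt
    have hmono : MonotoneOn g s := by
      apply monotoneOn_of_hasDerivWithinAt_nonneg hsconv hgc
        (f' := fun t => Φ'' (u + t • w) w (Pi.single i 1))
      · rw [hsopen.interior_eq]
        intro t ht
        exact (hgd t ht).hasDerivWithinAt
      · rw [hsopen.interior_eq]
        exact hnonneg
    have := hmono h0 h1 zero_le_one
    simpa [hg, hwdef] using this
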